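/- Let I = [0,a], let f : I → ℝ be superterzatic, let x₁,…,xₙ ∈ I, let p,r ∈ (0,1)ⁿ with ∑pᵢ = ∑rᵢ = 1, and let q₁,…,q_k > 0 with ∑q_j = 1. Set M = max over all (i_1,…,i_k) ∈ {1,…,n}^k of (p_{i_1}⋯p_{i_k})/(r_{i_1}⋯r_{i_k}), define J_k(f,p,q,x) = ∑_{i_1,…,i_k=1}^n p_{i_1}⋯p_{i_k} f(∑_{j=1}^k q_j x_{i_j}) − f(∑_{i=1}^n p_i x_i), and put x̌ = ∑_{i=1}^n r_i x_i. Then M·J_k(f,r,q,x) − J_k(f,p,q,x) ≥ ∑_{i_1,…,i_k=1}^n (M r_{i_1}⋯r_{i_k} − p_{i_1}⋯p_{i_k}) (∑_{j=1}^k q_j x_{i_j}) [ (∑_{j=1}^k q_j x_{i_j} − x̌) C(x̌) + f(|∑_{j=1}^k q_j x_{i_j} − x̌|)/|∑_{j=1}^k q_j x_{i_j} − x̌| ] + (∑_{i=1}^n p_i x_i) [ (∑_{i=1}^n (p_i − r_i) x_i) C(x̌) + f(|∑_{i=1}^n (p_i − r_i) x_i|)/|∑_{i=1}^n (p_i − r_i)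 x_i| ], where C(x̌) is the constant provided by superterzaticity of f at x̌. -/

import Mathlib

open Finset

lemma aux_sum_prod_eq_one {n k : ℕ} (p : Fin n → ℝ) (hp : ∑ i, p i = 1) :
    ∑ j : Fin k → Fin n, ∏ l, p (j l) = 1 := by
  have h := Finset.prod_univ_sum (fun _ : Fin k => (univ : Finset (Fin n)))
    (fun _ i => p i)
  rw [Fintype.piFinset_univ] at h
  rw [← h]
  simp [hp]

lemma aux_sum_prod_mul {n k : ℕ} (p x : Fin n → ℝ) (hp : ∑ i, p i = 1)
    (q : Fin k → ℝ) (hq : ∑ l, q l = 1) :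
    ∑ j : Fin k → Fin n, (∏ l, p (j l)) * (∑ l, q l * x (j l)) =
      ∑ i, p i * x i := by
  calc ∑ j : Fin k → Fin n, (∏ l, p (j l)) * (∑ l, q l * x (j l))
      = ∑ j : Fin k → Fin n, ∑ l, q l *
          ∏ l', (if l' = l then p (j l') * x (j l') else p (j l')) := by
        refine Finset.sum_congr rfl fun j _ => ?_
        rw [Finset.mul_sum]
        refine Finset.sum_congr rfl fun l _ => ?_
        have h1 : ∏ l', (if l' = l then p (j l') * x (j l') else p (j l'))
            = (p (j l) * x (j l)) * ∏ l' ∈ univ.erase l, p (j l') := by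
          rw [← Finset.mul_prod_erase univ _ (mem_univ l)]
          simp only [if_pos rfl]
          congr 1
          exact Finset.prod_congr rfl fun l' hl' =>
            if_neg (Finset.mem_erase.mp hl').1
        have h2 : ∏ l', p (j l') = p (j l) * ∏ l' ∈ univ.erase l, p (j l') :=
          (Finset.mul_prod_erase univ _ (mem_univ l)).symm
        rw [h1, h2]; ring
    _ = ∑ l, q l * ∑ j : Fin k → Fin n,
          ∏ l', (if l' = l then p (j l') * x (j l') else p (j l')) := by
        rw [Finset.sum_comm]
        exact Finset.sum_congr rfl fun l _ => (Finset.mul_sum _ _ _).symm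
    _ = ∑ l, q l * (∑ i, p i * x i) := by
        refine Finset.sum_congr rfl fun l _ => ?_
        congr 1
        have h := Finset.prod_univ_sum (fun _ : Fin k => (univ : Finset (Fin n)))
          (fun l' i => if l' = l then p i * x i else p i)
        rw [Fintype.piFinset_univ] at h
        rw [← h]
        calc ∏ l', ∑ i, (if l' = l then p i * x i else p i)
            = ∏ l', (if l' = l then ∑ i, p i * x i else 1) := by
              refine Finset.prod_congr rfl fun l' _ => ?_
              by_cases hl : l' = l <;> simp [hl, hp]
          _ = ∑ i, p i * x i := by
              rw [Finset.prod_ite_eq' univ l (fun _ => ∑ i, p i * x i)]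
              simp
    _ = ∑ i, p i * x i := by rw [← Finset.sum_mul, hq, one_mul]

/-- `SuperterzaticWith a f C` : the function `f` is superterzatic on `I = [0,a]`,
with `C x̄` the constant provided at each point `x̄ ∈ I`. -/
def SuperterzaticWith (a : ℝ) (f : ℝ → ℝ) (C : ℝ → ℝ) : Prop :=
  ∀ xbar ∈ Set.Icc (0 : ℝ) a, ∀ (n : ℕ) (x p : Fin n → ℝ),
    (∀ i, x i ∈ Set.Icc (0 : ℝ) a) → (∀ i, 0 ≤ p i) → (∑ i, p i = 1) →
    (∑ i, p i * x i = xbar) →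
    ∑ i, p i * f (x i) - f xbar ≥
      ∑ i, p i * x i * ((x i - xbar) * C xbar + f |x i - xbar| / |x i - xbar|)

/-- The generalized Jensen functional `J_k(f, p, q, x)` of Corollary 7
(the case `p₁ = ⋯ = p_k = p`, `x₁ = ⋯ = x_k = x`). -/
noncomputable def genJensenCor (f : ℝ → ℝ) (n k : ℕ)
    (p : Fin n → ℝ) (q : Fin k → ℝ) (x : Fin n → ℝ) : ℝ :=
  ∑ j : Fin k → Fin n, (∏ l, p (j l)) * f (∑ l, q l * x (j l)) -
    f (∑ i, p i * x i)

/-- Corollary 7, second inequality. -/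
theorem max_smul_genJensenCor_sub_ge (a : ℝ) (f C : ℝ → ℝ)
    (hf : SuperterzaticWith a f C)
    (n k : ℕ) (x p r : Fin n → ℝ) (q : Fin k → ℝ)
    (hx : ∀ i, x i ∈ Set.Icc (0 : ℝ) a)
    (hp : ∀ i, p i ∈ Set.Ioo (0 : ℝ) 1) (hpsum : ∑ i, p i = 1)
    (hr : ∀ i, r i ∈ Set.Ioo (0 : ℝ) 1) (hrsum : ∑ i, r i = 1)
    (hq : ∀ j, 0 < q j) (hqsum : ∑ j, q j = 1)
    (M : ℝ)
    (hM : IsGreatest {v : ℝ | ∃ j : Fin k → Fin n,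
      v = (∏ l, p (j l)) / (∏ l, r (j l))} M)
    (xcheck : ℝ) (hxcheck : xcheck = ∑ i, r i * x i) :
    M * genJensenCor f n k r q x - genJensenCor f n k p q x ≥
      (∑ j : Fin k → Fin n,
        (M * (∏ l, r (j l)) - ∏ l, p (j l)) * (∑ l, q l * x (j l)) *
          ((∑ l, q l * x (j l) - xcheck) * C xcheck +
            f |∑ l, q l * x (j l) - xcheck| / |∑ l, q l * x (j l) - xcheck|))
      + (∑ i, p i * x i) *
          ((∑ i, (p i - r i) * x i) * C xcheck +
            f |∑ i, (p i - r i) * x i| / |∑ i, (p i - r i) * x i|) := by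
  -- degenerate cases
  rcases Nat.eq_zero_or_pos n with hn | hn
  · subst hn; simp at hpsum
  rcases Nat.eq_zero_or_pos k with hk | hk
  · subst hk; simp at hqsum
  -- basic facts
  have ha : 0 ≤ a := le_trans (hx ⟨0, hn⟩).1 (hx ⟨0, hn⟩).2
  have hrprod_pos : ∀ j : Fin k → Fin n, 0 < ∏ l, r (j l) :=
    fun j => Finset.prod_pos fun l _ => (hr (j l)).1
  have hpprod_pos : ∀ j : Fin k → Fin n, 0 < ∏ l, p (j l) :=
    fun j => Finset.prod_pos fun l _ => (hp (j l)).1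
  have hMpos : 0 < M := by
    obtain ⟨j0, hj0⟩ := hM.1
    rw [hj0]
    exact div_pos (hpprod_pos j0) (hrprod_pos j0)
  have hMne : M ≠ 0 := ne_of_gt hMpos
  -- the weights for the tuples
  set Phi : ℝ → ℝ := fun z =>
    (z - xcheck) * C xcheck + f |z - xcheck| / |z - xcheck| with hPhi
  set y : (Fin k → Fin n) → ℝ := fun j => ∑ l, q l * x (j l) with hy
  set w : (Fin k → Fin n) → ℝ := fun j => M * (∏ l, r (j l)) - ∏ l, p (j l)
    with hw
  have hwnn : ∀ j, 0 ≤ w j := by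
    intro j
    have := hM.2 ⟨j, rfl⟩
    have h2 : (∏ l, p (j l)) / (∏ l, r (j l)) ≤ M := this
    rw [div_le_iff₀ (hrprod_pos j)] at h2
    simp only [hw]
    linarith
  set X : ℝ := ∑ i, p i * x i with hX
  -- membership facts
  have hmem : ∀ (g : Fin n → ℝ), (∀ i, 0 ≤ g i) → (∑ i, g i = 1) →
      ∑ i, g i * x i ∈ Set.Icc (0 : ℝ) a := by
    intro g hg hgs
    constructor
    · exact Finset.sum_nonneg fun i _ => mul_nonneg (hg i) (hx i).1
    · calc ∑ i, g i * x i ≤ ∑ i, g i * a :=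
            Finset.sum_le_sum fun i _ =>
              mul_le_mul_of_nonneg_left (hx i).2 (hg i)
        _ = a := by rw [← Finset.sum_mul, hgs, one_mul]
  have hXmem : X ∈ Set.Icc (0 : ℝ) a :=
    hmem p (fun i => (hp i).1.le) hpsum
  have hxcheckmem : xcheck ∈ Set.Icc (0 : ℝ) a := by
    rw [hxcheck]; exact hmem r (fun i => (hr i).1.le) hrsum
  have hymem : ∀ j, y j ∈ Set.Icc (0 : ℝ) a := by
    intro j
    constructor
    · exact Finset.sum_nonneg fun l _ => mul_nonneg (hq l).le (hx (j l)).1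
    · calc ∑ l, q l * x (j l) ≤ ∑ l, q l * a :=
            Finset.sum_le_sum fun l _ =>
              mul_le_mul_of_nonneg_left (hx (j l)).2 (hq l).le
        _ = a := by rw [← Finset.sum_mul, hqsum, one_mul]
  -- key sums
  have hrsum' : ∑ j : Fin k → Fin n, ∏ l, r (j l) = 1 :=
    aux_sum_prod_eq_one r hrsum
  have hpsum' : ∑ j : Fin k → Fin n, ∏ l, p (j l) = 1 :=
    aux_sum_prod_eq_one p hpsum
  have hrmean : ∑ j : Fin k → Fin n, (∏ l, r (j l)) * y j = xcheck := by
    rw [hxcheck]; exact aux_sum_prod_mul r x hrsum q hqsum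
  have hpmean : ∑ j : Fin k → Fin n, (∏ l, p (j l)) * y j = X :=
    aux_sum_prod_mul p x hpsum q hqsum
  -- the equivalence
  set e : Fin (n ^ k) ≃ (Fin k → Fin n) := finFunctionFinEquiv.symm with he
  set xs : Fin (n ^ k + 1) → ℝ := Fin.cons X (fun t => y (e t)) with hxs
  set ps : Fin (n ^ k + 1) → ℝ := Fin.cons (1 / M) (fun t => w (e t) / M)
    with hps
  have hsum_e : ∀ g : (Fin k → Fin n) → ℝ,
      ∑ t : Fin (n ^ k), g (e t) = ∑ j : Fin k → Fin n, g j :=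
    fun g => Equiv.sum_comp e g
  have hxsmem : ∀ i, xs i ∈ Set.Icc (0 : ℝ) a := by
    intro i
    refine Fin.cases ?_ ?_ i
    · simpa [hxs] using hXmem
    · intro t; simpa [hxs] using hymem (e t)
  have hpsnn : ∀ i, 0 ≤ ps i := by
    intro i
    refine Fin.cases ?_ ?_ i
    · simp [hps]; positivity
    · intro t
      simp only [hps, Fin.cons_succ]
      exact div_nonneg (hwnn (e t)) hMpos.le
  have hwsum : ∑ j : Fin k → Fin n, w j = M - 1 := by
    simp only [hw]
    rw [Finset.sum_sub_distrib, ← Finset.mul_sum, hrsum', hpsum', mul_one]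
  have hpssum : ∑ i, ps i = 1 := by
    rw [hps, Fin.sum_cons]
    rw [show (∑ t : Fin (n ^ k), w (e t) / M)
        = ∑ j : Fin k → Fin n, w j / M from hsum_e (fun j => w j / M)]
    rw [← Finset.sum_div, hwsum]
    field_simp
    ring
  have hwy : ∑ j : Fin k → Fin n, w j * y j = M * xcheck - X := by
    simp only [hw]
    have : ∀ j : Fin k → Fin n,
        (M * (∏ l, r (j l)) - ∏ l, p (j l)) * y j
          = M * ((∏ l, r (j l)) * y j) - (∏ l, p (j l)) * y j := by
      intro j; ring
    rw [Finset.sum_congr rfl fun j _ => this j, Finset.sum_sub_distrib,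
      ← Finset.mul_sum, hrmean, hpmean]
  have hpsmean : ∑ i, ps i * xs i = xcheck := by
    rw [hps, hxs]
    rw [show (∑ i : Fin (n ^ k + 1),
        Fin.cons (1 / M) (fun t => w (e t) / M) i *
          Fin.cons X (fun t => y (e t)) i)
      = 1 / M * X + ∑ t : Fin (n ^ k), w (e t) / M * y (e t) from by
        rw [← Fin.sum_cons (1 / M * X)
          (fun t => w (e t) / M * y (e t))]
        exact Finset.sum_congr rfl fun i _ => by
          refine Fin.cases ?_ (fun t => ?_) i <;> simp]
    rw [show (∑ t : Fin (n ^ k), w (e t) / M * y (e t))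
        = ∑ j : Fin k → Fin n, w j / M * y j from
        hsum_e (fun j => w j / M * y j)]
    have : ∑ j : Fin k → Fin n, w j / M * y j
        = (∑ j : Fin k → Fin n, w j * y j) / M := by
      rw [Finset.sum_div]
      exact Finset.sum_congr rfl fun j _ => by ring
    rw [this, hwy]
    field_simp
    ring
  -- apply superterzaticity
  have H := hf xcheck hxcheckmem (n ^ k + 1) xs ps hxsmem hpsnn hpssum hpsmean
  -- rewrite the two sums in H
  have hH1 : ∑ i, ps i * f (xs i)
      = (f X + ∑ j : Fin k → Fin n, w j * f (y j)) / M := by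
    rw [hps, hxs, Fin.sum_univ_succ]
    simp only [Fin.cons_zero, Fin.cons_succ]
    rw [show (∑ t : Fin (n ^ k), w (e t) / M * f (y (e t)))
        = ∑ j : Fin k → Fin n, w j / M * f (y j) from
        hsum_e (fun j => w j / M * f (y j))]
    rw [show (∑ j : Fin k → Fin n, w j / M * f (y j))
        = (∑ j : Fin k → Fin n, w j * f (y j)) / M from by
        rw [Finset.sum_div]
        exact Finset.sum_congr rfl fun j _ => by ring]
    field_simp
  have hH2 : ∑ i, ps i * xs i * Phi (xs i)
      = (X * Phi X + ∑ j : Fin k → Fin n, w j * y j * Phi (y j)) / M := by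
    rw [hps, hxs, Fin.sum_univ_succ]
    simp only [Fin.cons_zero, Fin.cons_succ]
    rw [show (∑ t : Fin (n ^ k), w (e t) / M * y (e t) * Phi (y (e t)))
        = ∑ j : Fin k → Fin n, w j / M * y j * Phi (y j) from
        hsum_e (fun j => w j / M * y j * Phi (y j))]
    rw [show (∑ j : Fin k → Fin n, w j / M * y j * Phi (y j))
        = (∑ j : Fin k → Fin n, w j * y j * Phi (y j)) / M from by
        rw [Finset.sum_div]
        exact Finset.sum_congr rfl fun j _ => by ring]
    field_simp
  have HPhi : ∑ i, ps i * f (xs i) - f xcheck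
      ≥ ∑ i, ps i * xs i * Phi (xs i) := H
  rw [hH1, hH2] at HPhi
  -- multiply the inequality by M
  set T1 : ℝ := ∑ j : Fin k → Fin n, (∏ l, r (j l)) * f (y j) with hT1
  set T2 : ℝ := ∑ j : Fin k → Fin n, (∏ l, p (j l)) * f (y j) with hT2
  have hwf : ∑ j : Fin k → Fin n, w j * f (y j) = M * T1 - T2 := by
    simp only [hw, hT1, hT2]
    rw [show (∑ j : Fin k → Fin n,
        (M * (∏ l, r (j l)) - ∏ l, p (j l)) * f (y j))
      = ∑ j : Fin k → Fin n,
          (M * ((∏ l, r (j l)) * f (y j)) - (∏ l, p (j l)) * f (y j)) from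
        Finset.sum_congr rfl fun j _ => by ring]
    rw [Finset.sum_sub_distrib, ← Finset.mul_sum]
  rw [hwf] at HPhi
  have Hmul : f X + (M * T1 - T2) - M * f xcheck
      ≥ X * Phi X + ∑ j : Fin k → Fin n, w j * y j * Phi (y j) := by
    have h1 := mul_le_mul_of_nonneg_right HPhi hMpos.le
    rw [sub_mul, div_mul_cancel₀ _ hMne, div_mul_cancel₀ _ hMne] at h1
    linarith
  -- identify the goal
  have hdiff : ∑ i, (p i - r i) * x i = X - xcheck := by
    rw [hX, hxcheck, ← Finset.sum_sub_distrib]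
    exact Finset.sum_congr rfl fun i _ => by ring
  have hgoalR : (∑ j : Fin k → Fin n,
        (M * (∏ l, r (j l)) - ∏ l, p (j l)) * (∑ l, q l * x (j l)) *
          ((∑ l, q l * x (j l) - xcheck) * C xcheck +
            f |∑ l, q l * x (j l) - xcheck| / |∑ l, q l * x (j l) - xcheck|))
      = ∑ j : Fin k → Fin n, w j * y j * Phi (y j) := rfl
  have hgoalX : (∑ i, p i * x i) *
        ((∑ i, (p i - r i) * x i) * C xcheck +
          f |∑ i, (p i - r i) * x i| / |∑ i, (p i - r i) * x i|)
      = X * Phi X := by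
    rw [hdiff]
  rw [hgoalR, hgoalX]
  have hgJr : genJensenCor f n k r q x = T1 - f xcheck := by
    rw [genJensenCor, hT1, hxcheck]
  have hgJp : genJensenCor f n k p q x = T2 - f X := by
    rw [genJensenCor, hT2, hX]
  rw [hgJr, hgJp]
  linarith
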